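/- The R_ε-Conjecture fails for the equivalent norm |{a_i}| = ‖{a_i}‖_{ℓ₂} + sup_i |a_i| on ℓ₂: the vectors f_i = (e_{2i} + e_{2i+1})/(√2 + 1), which have norm one in this new norm, form a Riesz basic sequence, but no infinite subset J satisfies (1-ε)Σ|a_i|² ≤ |Σ_{i∈J} a_i f_i|² ≤ (1+ε)Σ|a_i|² for small ε. Specifically, for J with |J| = n ≥ 2 and a_i = 1/√n, |Σ_{i∈J} a_i f_i| = (√2 + 1/√n)/(√2+1), which is bounded away from 1. -/

import Mathlib

/- The `R_ε`-Conjecture fails for the equivalent norm `|f| = ‖f‖₂ + sup_i |f(i)|`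
on `ℓ₂`: the vectors `f_i = (e_{2i} + e_{2i+1})/(√2+1)` have norm one in this norm
and form a Riesz basic sequence, but
`|Σ_{i∈J} f_i/√n| = (√2 + 1/√n)/(√2+1)` whenever `|J| = n`, which is bounded away
from `1` for `n ≥ 2`; hence no infinite subset satisfies the `R_ε` inequalities for
small `ε`. -/

noncomputable section

/-- The equivalent norm `|f| = ‖f‖_{ℓ₂} + sup_i |f i|` on `ℓ₂`. -/
def newNorm (f : lp (fun _ : ℕ => ℂ) 2) : ℝ := ‖f‖ + ⨆ i, ‖f i‖

/-- `f_i = (e_{2i} + e_{2i+1})/(√2 + 1)`. -/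
def fvec (i : ℕ) : lp (fun _ : ℕ => ℂ) 2 :=
  (((Real.sqrt 2 + 1 : ℝ) : ℂ))⁻¹ •
    (lp.single 2 (2 * i) (1 : ℂ) + lp.single 2 (2 * i + 1) (1 : ℂ))

/-- doubled index set -/
def Tset (s : Finset ℕ) : Finset ℕ :=
  s.image (fun i => 2 * i) ∪ s.image (fun i => 2 * i + 1)

lemma Tset_disj (s : Finset ℕ) :
    Disjoint (s.image (fun i => 2 * i)) (s.image (fun i => 2 * i + 1)) := by
  rw [Finset.disjoint_left]
  intro j hj hj'
  simp only [Finset.mem_image] at hj hj'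
  obtain ⟨i, _, rfl⟩ := hj
  obtain ⟨i', _, h⟩ := hj'
  omega

lemma sum_fvec_eq (s : Finset ℕ) (a : ℕ → ℂ) :
    ∑ i ∈ s, a i • fvec i
      = ((Real.sqrt 2 + 1 : ℝ) : ℂ)⁻¹ •
        ∑ j ∈ Tset s, lp.single 2 j (a (j / 2)) := by
  rw [Tset, Finset.sum_union (Tset_disj s),
    Finset.sum_image (fun i _ j _ h => by omega),
    Finset.sum_image (fun i _ j _ h => by omega)]
  have h1 : ∀ i : ℕ, 2 * i / 2 = i := fun i => by omega
  have h2 : ∀ i : ℕ, (2 * i + 1) / 2 = i := fun i => by omega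
  simp only [h1, h2]
  have step : ∀ i : ℕ, a i • fvec i
      = ((Real.sqrt 2 + 1 : ℝ) : ℂ)⁻¹ •
        (lp.single 2 (2 * i) (a i) + lp.single 2 (2 * i + 1) (a i)) := by
    intro i
    rw [fvec, smul_comm]
    congr 1
    rw [smul_add, ← lp.single_smul, ← lp.single_smul]
    simp
  simp only [step, smul_add, Finset.sum_add_distrib, Finset.smul_sum]

lemma sum_sq_Tset (s : Finset ℕ) (g : ℕ → ℝ) :
    ∑ j ∈ Tset s, g (j / 2) ^ 2 = 2 * ∑ i ∈ s, g i ^ 2 := by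
  rw [Tset, Finset.sum_union (Tset_disj s),
    Finset.sum_image (fun i _ j _ h => by omega),
    Finset.sum_image (fun i _ j _ h => by omega)]
  have h1 : ∀ i : ℕ, 2 * i / 2 = i := fun i => by omega
  have h2 : ∀ i : ℕ, (2 * i + 1) / 2 = i := fun i => by omega
  simp only [h1, h2]; ring

lemma norm_coe_inv : ‖(((Real.sqrt 2 + 1 : ℝ) : ℂ))⁻¹‖ = (Real.sqrt 2 + 1)⁻¹ := by
  rw [norm_inv, Complex.norm_real, Real.norm_eq_abs, abs_of_pos]
  positivity

lemma norm_sq_sum_fvec (s : Finset ℕ) (a : ℕ → ℂ) :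
    ‖∑ i ∈ s, a i • fvec i‖ ^ 2
      = (Real.sqrt 2 + 1)⁻¹ ^ 2 * (2 * ∑ i ∈ s, ‖a i‖ ^ 2) := by
  rw [sum_fvec_eq, norm_smul, norm_coe_inv, mul_pow]
  congr 1
  have h := lp.norm_sum_single (p := 2) (E := fun _ : ℕ => ℂ) (by norm_num)
    (fun j => a (j / 2)) (Tset s)
  simp only [ENNReal.toReal_ofNat] at h
  rw [← Real.rpow_natCast _ 2, Nat.cast_ofNat, h]
  rw [← sum_sq_Tset s (fun i => ‖a i‖)]
  exact Finset.sum_congr rfl fun j _ => by rw [← Real.rpow_natCast _ 2]; norm_num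

lemma apply_sum_fvec (s : Finset ℕ) (a : ℕ → ℂ) (k : ℕ) :
    (∑ i ∈ s, a i • fvec i) k
      = if k ∈ Tset s then ((Real.sqrt 2 + 1 : ℝ) : ℂ)⁻¹ * a (k / 2) else 0 := by
  rw [sum_fvec_eq]
  rw [lp.coeFn_smul, Pi.smul_apply, lp.coeFn_sum, Finset.sum_apply]
  simp only [lp.single_apply]
  rw [Finset.sum_pi_single]
  split <;> simp

lemma sup_indicator (T : Finset ℕ) (hT : T.Nonempty) (r : ℝ) (hr : 0 ≤ r) :
    (⨆ k : ℕ, if k ∈ T then r else 0) = r := by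
  apply le_antisymm
  · exact ciSup_le fun k => by split <;> simp [hr]
  · obtain ⟨k, hk⟩ := hT
    have : BddAbove (Set.range fun k : ℕ => if k ∈ T then r else 0) :=
      ⟨r, by rintro x ⟨k, rfl⟩; dsimp only; split <;> simp [hr]⟩
    calc r = if k ∈ T then r else 0 := by rw [if_pos hk]
    _ ≤ _ := le_ciSup this k

lemma sup_sum_fvec (s : Finset ℕ) (hs : s.Nonempty) (c : ℂ) :
    (⨆ k : ℕ, ‖(∑ i ∈ s, c • fvec i) k‖) = (Real.sqrt 2 + 1)⁻¹ * ‖c‖ := by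
  have heq : ∀ k : ℕ, ‖(∑ i ∈ s, c • fvec i) k‖
      = if k ∈ Tset s then (Real.sqrt 2 + 1)⁻¹ * ‖c‖ else 0 := by
    intro k
    rw [apply_sum_fvec s (fun _ => c) k]
    split
    · rw [norm_mul, norm_coe_inv]
    · simp
  simp only [heq]
  refine sup_indicator _ ?_ _ (by positivity)
  obtain ⟨i, hi⟩ := hs
  refine ⟨2 * i, ?_⟩
  rw [Tset, Finset.mem_union]
  exact Or.inl (Finset.mem_image_of_mem _ hi)

lemma sqrt2_pos : (0:ℝ) < Real.sqrt 2 := by positivity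

lemma newNorm_const (s : Finset ℕ) (hs : s.Nonempty) (c : ℂ) :
    newNorm (∑ i ∈ s, c • fvec i)
      = (Real.sqrt 2 + 1)⁻¹ * (Real.sqrt 2 * Real.sqrt (s.card : ℝ) * ‖c‖ + ‖c‖) := by
  rw [newNorm, sup_sum_fvec s hs c]
  have hnorm : ‖∑ i ∈ s, c • fvec i‖
      = (Real.sqrt 2 + 1)⁻¹ * (Real.sqrt 2 * Real.sqrt (s.card : ℝ) * ‖c‖) := by
    have h := norm_sq_sum_fvec s (fun _ => c)
    simp only [Finset.sum_const, nsmul_eq_mul] at h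
    rw [← Real.sqrt_sq (norm_nonneg (∑ i ∈ s, c • fvec i)), h]
    rw [show ((Real.sqrt 2 + 1)⁻¹ ^ 2 * (2 * ((s.card : ℝ) * ‖c‖ ^ 2)))
      = ((Real.sqrt 2 + 1)⁻¹ * ‖c‖) ^ 2 * (2 * (s.card : ℝ)) by ring]
    rw [Real.sqrt_mul (by positivity), Real.sqrt_sq (by positivity),
      Real.sqrt_mul (by norm_num)]
    ring
  rw [hnorm]; ring


lemma one_lt_sqrt2 : (1:ℝ) < Real.sqrt 2 := by
  rw [show (1:ℝ) = Real.sqrt 1 by simp]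
  exact Real.sqrt_lt_sqrt (by norm_num) (by norm_num)

lemma norm_coe_sqrt_inv (x : ℝ) (hx : 0 ≤ x) :
    ‖(((Real.sqrt x : ℝ) : ℂ))⁻¹‖ = (Real.sqrt x)⁻¹ := by
  rw [norm_inv, Complex.norm_real, Real.norm_eq_abs, abs_of_nonneg (Real.sqrt_nonneg x)]

/-- Part 3 as a standalone lemma. -/
lemma part3 (s : Finset ℕ) (hs : s.Nonempty) :
    newNorm (∑ i ∈ s, ((Real.sqrt (s.card : ℝ) : ℂ))⁻¹ • fvec i) =
      (Real.sqrt 2 + (Real.sqrt (s.card : ℝ))⁻¹) / (Real.sqrt 2 + 1) := by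
  have hn : (0:ℝ) < (s.card : ℝ) := by
    exact_mod_cast Finset.card_pos.mpr hs
  have hsn : (0:ℝ) < Real.sqrt (s.card : ℝ) := Real.sqrt_pos.mpr hn
  rw [newNorm_const s hs _, norm_coe_sqrt_inv _ hn.le]
  have h1 : Real.sqrt (s.card : ℝ) * (Real.sqrt (s.card : ℝ))⁻¹ = 1 :=
    mul_inv_cancel₀ hsn.ne'
  rw [mul_assoc, h1, mul_one, inv_mul_eq_div]

theorem Reps_conjecture_fails_for_equivalent_norm :
    -- each `f_i` has norm one in the new norm
    (∀ i, newNorm (fvec i) = 1) ∧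
    -- `{f_i}` is a Riesz basic sequence
    (∃ A B : ℝ, 0 < A ∧ 0 < B ∧ ∀ (s : Finset ℕ) (a : ℕ → ℂ),
      A * ∑ i ∈ s, ‖a i‖ ^ 2 ≤ ‖∑ i ∈ s, a i • fvec i‖ ^ 2 ∧
      ‖∑ i ∈ s, a i • fvec i‖ ^ 2 ≤ B * ∑ i ∈ s, ‖a i‖ ^ 2) ∧
    -- the explicit computation for `a_i = 1/√n` on a set of cardinality `n`
    (∀ s : Finset ℕ, s.Nonempty →
      newNorm (∑ i ∈ s, ((Real.sqrt (s.card : ℝ) : ℂ))⁻¹ • fvec i) =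
        (Real.sqrt 2 + (Real.sqrt (s.card : ℝ))⁻¹) / (Real.sqrt 2 + 1)) ∧
    -- this value is bounded away from 1 for `n ≥ 2`
    (∃ c : ℝ, c < 1 ∧ ∀ s : Finset ℕ, 2 ≤ s.card →
      newNorm (∑ i ∈ s, ((Real.sqrt (s.card : ℝ) : ℂ))⁻¹ • fvec i) ≤ c) ∧
    -- hence no infinite subset satisfies the `R_ε` inequalities for small `ε`
    (∃ ε₀ : ℝ, 0 < ε₀ ∧ ∀ ε : ℝ, 0 < ε → ε < ε₀ → ∀ J : Set ℕ, J.Infinite →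
      ¬ (∀ s : Finset ℕ, ↑s ⊆ J → ∀ a : ℕ → ℂ,
        (1 - ε) * ∑ i ∈ s, ‖a i‖ ^ 2 ≤ newNorm (∑ i ∈ s, a i • fvec i) ^ 2 ∧
        newNorm (∑ i ∈ s, a i • fvec i) ^ 2 ≤ (1 + ε) * ∑ i ∈ s, ‖a i‖ ^ 2)) := by
  have hr1 : (1:ℝ) < Real.sqrt 2 := one_lt_sqrt2
  have hr0 : (0:ℝ) < Real.sqrt 2 := by positivity
  have hrp : (0:ℝ) < Real.sqrt 2 + 1 := by positivity
  set c : ℝ := (Real.sqrt 2 + (Real.sqrt 2)⁻¹) / (Real.sqrt 2 + 1) with hc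
  have hc1 : c < 1 := by
    rw [hc, div_lt_one hrp]
    have : (Real.sqrt 2)⁻¹ < 1 := inv_lt_one_of_one_lt₀ hr1
    linarith
  have hc0 : 0 ≤ c := by positivity
  -- part 4 as a have
  have part4 : ∀ s : Finset ℕ, 2 ≤ s.card →
      newNorm (∑ i ∈ s, ((Real.sqrt (s.card : ℝ) : ℂ))⁻¹ • fvec i) ≤ c := by
    intro s hcard
    have hs : s.Nonempty := Finset.card_pos.mp (by omega)
    rw [part3 s hs, hc]
    have h2n : Real.sqrt 2 ≤ Real.sqrt (s.card : ℝ) :=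
      Real.sqrt_le_sqrt (by exact_mod_cast hcard)
    have : (Real.sqrt (s.card : ℝ))⁻¹ ≤ (Real.sqrt 2)⁻¹ :=
      inv_anti₀ hr0 h2n
    gcongr
  refine ⟨?_, ?_, part3, ⟨c, hc1, part4⟩, ?_⟩
  · -- part 1
    intro i
    have : fvec i = ∑ j ∈ ({i} : Finset ℕ), (1:ℂ) • fvec j := by simp
    rw [this, newNorm_const _ ⟨i, Finset.mem_singleton_self i⟩ 1]
    simp only [Finset.card_singleton, Nat.cast_one, Real.sqrt_one, norm_one, mul_one]
    rw [inv_mul_cancel₀ hrp.ne']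
  · -- part 2
    refine ⟨2 * (Real.sqrt 2 + 1)⁻¹ ^ 2, 2 * (Real.sqrt 2 + 1)⁻¹ ^ 2,
      by positivity, by positivity, fun s a => ?_⟩
    exact ⟨le_of_eq (by rw [norm_sq_sum_fvec]; ring),
      le_of_eq (by rw [norm_sq_sum_fvec]; ring)⟩
  · -- part 5
    refine ⟨1 - c ^ 2, by nlinarith, fun ε hε hεε₀ J hJ h => ?_⟩
    obtain ⟨t, hts, htcard⟩ := hJ.exists_subset_card_eq 2
    have ht : t.Nonempty := Finset.card_pos.mp (by omega)
    have hsum : ∑ i ∈ t, ‖(((Real.sqrt (t.card : ℝ) : ℂ))⁻¹)‖ ^ 2 = 1 := by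
      rw [Finset.sum_const, htcard, nsmul_eq_mul,
        norm_coe_sqrt_inv _ (by positivity), inv_pow, Real.sq_sqrt (by positivity)]
      push_cast
      norm_num
    have hlow := (h t hts (fun _ => ((Real.sqrt (t.card : ℝ) : ℂ))⁻¹)).1
    rw [hsum, mul_one] at hlow
    have hval := part3 t ht
    rw [htcard] at hval hlow
    push_cast at hval hlow
    rw [hval, ← hc] at hlow
    nlinarith
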